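/- Let p_c and p_u be probability densities on ℝ^d (with respect to Lebesgue measure), let k : ℝ^d × ℝ^d → ℝ be a measurable positive transition kernel with y ↦ k(y,x) differentiable, and define the noisy marginals q_c(y) = ∫ p_c(x) k(y, x) dx and q_u(y) = ∫ p_u(x) k(y, x) dx, assumed strictly positive. Let g(y, x) = ∇_y log k(y, x), and assume that for (Lebesgue-)a.e. y the score identities ∇ log q_c(y) = ∫ (p_c(x)k(y,x)/q_c(y)) g(y,x) dx and ∇ log q_u(y) = ∫ (p_u(x)k(y,x)/q_u(y)) g(y,x) dx hold, with ∫∫ ‖g(y,x)‖² p_c(x)k(y,x) dx dy < ∞ and ∫∫ (q_c(y)/q_u(y))‖g(y,x)‖² p_u(x)k(y,x) dx dy < ∞. Let η ≥ 0 and define, for measurable s : ℝ^d → ℝ^d with ∫ q_c(y)‖s(y)‖² dy < ∞, J(s) = (1+η)∫∫ ‖g(y,x) − s(y)‖² p_c(x) k(y,x) dx dy − η ∫∫ (q_c(y)/q_u(y)) ‖g(y,x) − s(y)‖² p_u(x) k(y,x) dx dy, and define s_cfg(y) = (1+η)∇log q_c(y) − η∇log q_u(y). Then J(s) − J(s_cfg)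 = ∫ q_c(y) ‖s(y) − s_cfg(y)‖² dy ≥ 0; in particular s_cfg minimizes J, uniquely up to modification on a q_c-null set. -/

import Mathlib

open MeasureTheory Real
open scoped RealInnerProductSpace

set_option maxHeartbeats 1000000

section auxlemmas
variable {α : Type*} [MeasurableSpace α] {μ : Measure α}
variable {E : Type*} [NormedAddCommGroup E] [InnerProductSpace ℝ E]

/-- If `ρ ≥ 0`, `ρ` and `ρ‖g‖²` are integrable, then `ρ • g` is integrable. -/
lemma aux_int_smul {ρ : α → ℝ} {g : α → E}
    (hρ0 : ∀ᵐ x ∂μ, 0 ≤ ρ x)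
    (hm : AEStronglyMeasurable (fun x => ρ x • g x) μ)
    (hρi : Integrable ρ μ) (hi2 : Integrable (fun x => ρ x * ‖g x‖ ^ 2) μ) :
    Integrable (fun x => ρ x • g x) μ := by
  refine Integrable.mono' ((hρi.add hi2).div_const 2) hm ?_
  filter_upwards [hρ0] with x hx
  simp only [Pi.add_apply]
  have h2 : 2 * ‖g x‖ ≤ 1 + ‖g x‖ ^ 2 := by nlinarith [sq_nonneg (‖g x‖ - 1)]
  have h3 : ‖ρ x • g x‖ = ρ x * ‖g x‖ := by
    rw [norm_smul, Real.norm_eq_abs, abs_of_nonneg hx]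
  rw [h3]
  nlinarith [norm_nonneg (g x)]

/-- Cauchy–Schwarz: `(∫ ρ h)² ≤ (∫ ρ) (∫ ρ h²)` for `ρ, h ≥ 0`. -/
lemma aux_cs_scalar {ρ h : α → ℝ}
    (hρ0 : ∀ᵐ x ∂μ, 0 ≤ ρ x) (hh0 : ∀ x, 0 ≤ h x)
    (hm : AEStronglyMeasurable (fun x => ρ x * h x) μ)
    (hρi : Integrable ρ μ) (hi2 : Integrable (fun x => ρ x * h x ^ 2) μ) :
    (∫ x, ρ x * h x ∂μ) ^ 2 ≤ (∫ x, ρ x ∂μ) * ∫ x, ρ x * h x ^ 2 ∂μ := by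
  have hρh : Integrable (fun x => ρ x * h x) μ := by
    refine Integrable.mono' ((hρi.add hi2).div_const 2) hm ?_
    filter_upwards [hρ0] with x hx
    simp only [Pi.add_apply]
    have h0 := hh0 x
    rw [Real.norm_eq_abs, abs_of_nonneg (mul_nonneg hx h0)]
    nlinarith [sq_nonneg (h x - 1)]
  set a := ∫ x, ρ x ∂μ with ha
  set b := ∫ x, ρ x * h x ∂μ with hb
  set c := ∫ x, ρ x * h x ^ 2 ∂μ with hc
  have ha0 : 0 ≤ a := integral_nonneg_of_ae hρ0
  have hc0 : 0 ≤ c := by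
    refine integral_nonneg_of_ae ?_
    filter_upwards [hρ0] with x hx
    exact mul_nonneg hx (sq_nonneg _)
  have key : ∀ t : ℝ, 0 ≤ c - 2 * t * b + t ^ 2 * a := by
    intro t
    have h1 : 0 ≤ ∫ x, ρ x * (h x - t) ^ 2 ∂μ := by
      refine integral_nonneg_of_ae ?_
      filter_upwards [hρ0] with x hx
      exact mul_nonneg hx (sq_nonneg _)
    have h2 : (fun x => ρ x * (h x - t) ^ 2)
        = fun x => (ρ x * h x ^ 2 - (2 * t) * (ρ x * h x)) + t ^ 2 * ρ x := by
      funext x; ring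
    have hInt1 : Integrable (fun x => ρ x * h x ^ 2 - (2 * t) * (ρ x * h x)) μ :=
      hi2.sub (hρh.const_mul _)
    have hInt2 : Integrable (fun x => t ^ 2 * ρ x) μ := hρi.const_mul _
    rw [h2, integral_add hInt1 hInt2, integral_sub hi2 (hρh.const_mul _),
      integral_const_mul, integral_const_mul] at h1
    linarith [h1]
  rcases eq_or_lt_of_le ha0 with h0 | hpos
  · have hρ0' : ρ =ᵐ[μ] 0 := (integral_eq_zero_iff_of_nonneg_ae hρ0 hρi).mp h0.symm
    have hb0 : b = 0 := by
      rw [hb]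
      have heq : (fun x => ρ x * h x) =ᵐ[μ] 0 := by
        filter_upwards [hρ0'] with x hx
        simp only [Pi.zero_apply] at hx ⊢
        simp [hx]
      rw [integral_congr_ae heq]
      simp
    rw [hb0, ← h0]
    simp
  · have hk := key (b / a)
    have h3 : 2 * (b / a) * b = 2 * b ^ 2 / a := by ring
    have h4 : (b / a) ^ 2 * a = b ^ 2 / a := by field_simp
    rw [h3, h4] at hk
    have h5 : b ^ 2 / a ≤ c := by
      have e : 2 * b ^ 2 / a = 2 * (b ^ 2 / a) := by ring
      linarith [hk, e]
    calc b ^ 2 = (b ^ 2 / a) * a := by field_simp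
    _ ≤ c * a := mul_le_mul_of_nonneg_right h5 ha0
    _ = a * c := mul_comm _ _

/-- Vector Cauchy–Schwarz: `‖∫ ρ • g‖² ≤ (∫ ρ)(∫ ρ ‖g‖²)`. -/
lemma aux_cs_smul {ρ : α → ℝ} {g : α → E}
    (hρ0 : ∀ᵐ x ∂μ, 0 ≤ ρ x)
    (hm : AEStronglyMeasurable (fun x => ρ x * ‖g x‖) μ)
    (hρi : Integrable ρ μ) (hi2 : Integrable (fun x => ρ x * ‖g x‖ ^ 2) μ) :
    ‖∫ x, ρ x • g x ∂μ‖ ^ 2 ≤ (∫ x, ρ x ∂μ) * ∫ x, ρ x * ‖g x‖ ^ 2 ∂μ := by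
  have h1 : ‖∫ x, ρ x • g x ∂μ‖ ≤ ∫ x, ρ x * ‖g x‖ ∂μ := by
    refine le_trans (norm_integral_le_integral_norm _) (le_of_eq ?_)
    refine integral_congr_ae ?_
    filter_upwards [hρ0] with x hx
    rw [norm_smul, Real.norm_eq_abs, abs_of_nonneg hx]
  calc ‖∫ x, ρ x • g x ∂μ‖ ^ 2 ≤ (∫ x, ρ x * ‖g x‖ ∂μ) ^ 2 :=
        pow_le_pow_left₀ (norm_nonneg _) h1 2
  _ ≤ (∫ x, ρ x ∂μ) * ∫ x, ρ x * ‖g x‖ ^ 2 ∂μ :=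
      aux_cs_scalar hρ0 (fun x => norm_nonneg _) hm hρi hi2

/-- The gradient of a fixed function is measurable. -/
lemma aux_meas_gradient [CompleteSpace E] [MeasurableSpace E] [BorelSpace E]
    (f : E → ℝ) : Measurable (fun y => gradient f y) := by
  have h1 : Measurable (fderiv ℝ f) := measurable_fderiv ℝ f
  have h2 : Continuous fun L : E →L[ℝ] ℝ => (InnerProductSpace.toDual ℝ E).symm L :=
    (InnerProductSpace.toDual ℝ E).symm.continuous
  exact h2.measurable.comp h1

/-- The inner product of the gradient with a vector is the directional derivative. -/
lemma aux_inner_gradient [CompleteSpace E] (f : E → ℝ) (y v : E) :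
    ⟪gradient f y, v⟫ = fderiv ℝ f y v :=
  InnerProductSpace.toDual_symm_apply

end auxlemmas

theorem cfg_equals_weighted_mclr {d : ℕ}
    (pc pu : EuclideanSpace ℝ (Fin d) → ℝ)
    (hpcm : Measurable pc) (hpum : Measurable pu)
    (hpc0 : ∀ x, 0 ≤ pc x) (hpu0 : ∀ x, 0 ≤ pu x)
    (hpci : Integrable pc) (hpui : Integrable pu)
    (hpc1 : ∫ x, pc x = 1) (hpu1 : ∫ x, pu x = 1)
    (k : EuclideanSpace ℝ (Fin d) → EuclideanSpace ℝ (Fin d) → ℝ)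
    (hkm : Measurable (fun z : EuclideanSpace ℝ (Fin d) × EuclideanSpace ℝ (Fin d) => k z.1 z.2))
    (hkpos : ∀ y x, 0 < k y x)
    (hkdiff : ∀ x, Differentiable ℝ (fun y => k y x))
    (qc qu : EuclideanSpace ℝ (Fin d) → ℝ)
    (hqc : ∀ y, qc y = ∫ x, pc x * k y x) (hqu : ∀ y, qu y = ∫ x, pu x * k y x)
    (hqcpos : ∀ y, 0 < qc y) (hqupos : ∀ y, 0 < qu y)
    (g : EuclideanSpace ℝ (Fin d) → EuclideanSpace ℝ (Fin d) → EuclideanSpace ℝ (Fin d))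
    (hg : ∀ y x, g y x = gradient (fun y' => Real.log (k y' x)) y)
    (hscore_c : ∀ᵐ y ∂volume, gradient (fun y' => Real.log (qc y')) y
      = ∫ x, (pc x * k y x / qc y) • g y x)
    (hscore_u : ∀ᵐ y ∂volume, gradient (fun y' => Real.log (qu y')) y
      = ∫ x, (pu x * k y x / qu y) • g y x)
    (hg_sq_c : Integrable
      (fun z : EuclideanSpace ℝ (Fin d) × EuclideanSpace ℝ (Fin d) =>
        pc z.2 * k z.1 z.2 * ‖g z.1 z.2‖ ^ 2) (volume.prod volume))
    (hg_sq_u : Integrable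
      (fun z : EuclideanSpace ℝ (Fin d) × EuclideanSpace ℝ (Fin d) =>
        (qc z.1 / qu z.1) * (pu z.2 * k z.1 z.2) * ‖g z.1 z.2‖ ^ 2) (volume.prod volume))
    (η : ℝ) (hη : 0 ≤ η)
    (J : (EuclideanSpace ℝ (Fin d) → EuclideanSpace ℝ (Fin d)) → ℝ)
    (hJ : ∀ t, J t
      = (1 + η) * (∫ y, ∫ x, pc x * k y x * ‖g y x - t y‖ ^ 2)
        - η * ∫ y, ∫ x, (qc y / qu y) * (pu x * k y x) * ‖g y x - t y‖ ^ 2)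
    (scfg : EuclideanSpace ℝ (Fin d) → EuclideanSpace ℝ (Fin d))
    (hscfg : ∀ y, scfg y
      = (1 + η) • gradient (fun y' => Real.log (qc y')) y
        - η • gradient (fun y' => Real.log (qu y')) y)
    (s : EuclideanSpace ℝ (Fin d) → EuclideanSpace ℝ (Fin d))
    (hsm : Measurable s)
    (hs_sq : Integrable (fun y => qc y * ‖s y‖ ^ 2)) :
    (J s - J scfg = ∫ y, qc y * ‖s y - scfg y‖ ^ 2) ∧
      (0 ≤ ∫ y, qc y * ‖s y - scfg y‖ ^ 2) ∧
      (J s = J scfg → s =ᵐ[volume.withDensity fun y => ENNReal.ofReal (qc y)] scfg) := by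
  classical
  set Sc : EuclideanSpace ℝ (Fin d) → EuclideanSpace ℝ (Fin d) :=
    fun y => gradient (fun y' => Real.log (qc y')) y with hScdef
  set Su : EuclideanSpace ℝ (Fin d) → EuclideanSpace ℝ (Fin d) :=
    fun y => gradient (fun y' => Real.log (qu y')) y with hSudef
  have hScy : ∀ y, gradient (fun y' => Real.log (qc y')) y = Sc y := fun y => rfl
  have hSuy : ∀ y, gradient (fun y' => Real.log (qu y')) y = Su y := fun y => rfl
  have hscfg' : ∀ y, scfg y = (1 + η) • Sc y - η • Su y := fun y => hscfg y
  -- measurability of qc, qu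
  have hqcm : Measurable qc := by
    have h1 : Measurable fun z : EuclideanSpace ℝ (Fin d) × EuclideanSpace ℝ (Fin d) =>
        pc z.2 * k z.1 z.2 := (hpcm.comp measurable_snd).mul hkm
    have h2 : StronglyMeasurable fun y : EuclideanSpace ℝ (Fin d) => ∫ x, pc x * k y x :=
      h1.stronglyMeasurable.integral_prod_right'
    have h3 : qc = fun y => ∫ x, pc x * k y x := funext hqc
    rw [h3]; exact h2.measurable
  have hqum : Measurable qu := by
    have h1 : Measurable fun z : EuclideanSpace ℝ (Fin d) × EuclideanSpace ℝ (Fin d) =>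
        pu z.2 * k z.1 z.2 := (hpum.comp measurable_snd).mul hkm
    have h2 : StronglyMeasurable fun y : EuclideanSpace ℝ (Fin d) => ∫ x, pu x * k y x :=
      h1.stronglyMeasurable.integral_prod_right'
    have h3 : qu = fun y => ∫ x, pu x * k y x := funext hqu
    rw [h3]; exact h2.measurable
  have hScm : Measurable Sc := aux_meas_gradient _
  have hSum : Measurable Su := aux_meas_gradient _
  have hscfgm : Measurable scfg := by
    have h1 : scfg = fun y => (1 + η) • Sc y - η • Su y := funext hscfg'
    rw [h1]
    exact (hScm.const_smul (1 + η)).sub (hSum.const_smul η)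
  have hkym : ∀ y, Measurable fun x => k y x := fun y => hkm.comp measurable_prodMk_left
  -- measurability of g in x for fixed y
  have hgmx : ∀ y, Measurable fun x => g y x := by
    intro y
    have hdiff : ∀ x, DifferentiableAt ℝ (fun y' => Real.log (k y' x)) y :=
      fun x => ((hkdiff x) y).log (ne_of_gt (hkpos y x))
    have hcomp : ∀ i : Fin d, Measurable fun x =>
        fderiv ℝ (fun y' => Real.log (k y' x)) y (EuclideanSpace.basisFun (Fin d) ℝ i) := by
      intro i
      have hc : Filter.Tendsto (fun n : ℕ => ‖(n : ℝ)‖) Filter.atTop Filter.atTop := by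
        simp only [Real.norm_natCast]
        exact tendsto_natCast_atTop_atTop
      have hlim : ∀ x, Filter.Tendsto
          (fun n : ℕ => (n : ℝ) • (Real.log (k (y + ((n : ℝ))⁻¹ •
              EuclideanSpace.basisFun (Fin d) ℝ i) x) - Real.log (k y x)))
          Filter.atTop
          (nhds (fderiv ℝ (fun y' => Real.log (k y' x)) y
            (EuclideanSpace.basisFun (Fin d) ℝ i))) := by
        intro x
        exact ((hdiff x).hasFDerivAt).lim _ hc
      refine measurable_of_tendsto_metrizable
        (f := fun n x => (n : ℝ) • (Real.log (k (y + ((n : ℝ))⁻¹ •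
          EuclideanSpace.basisFun (Fin d) ℝ i) x) - Real.log (k y x))) (fun n => ?_) ?_
      · show Measurable fun x => (n : ℝ) • (Real.log (k (y + ((n : ℝ))⁻¹ •
          EuclideanSpace.basisFun (Fin d) ℝ i) x) - Real.log (k y x))
        simp only [smul_eq_mul]
        exact ((Real.measurable_log.comp (hkym _)).sub
          (Real.measurable_log.comp (hkym y))).const_mul _
      · rw [tendsto_pi_nhds]
        exact hlim
    have hrepr : (fun x => g y x) = fun x =>
        ∑ i, (fderiv ℝ (fun y' => Real.log (k y' x)) y
          (EuclideanSpace.basisFun (Fin d) ℝ i)) • EuclideanSpace.basisFun (Fin d) ℝ i := by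
      funext x
      rw [hg y x]
      rw [← (EuclideanSpace.basisFun (Fin d) ℝ).sum_repr'
        (gradient (fun y' => Real.log (k y' x)) y)]
      refine Finset.sum_congr rfl fun i _ => ?_
      congr 1
      rw [real_inner_comm]
      exact aux_inner_gradient _ _ _
    rw [hrepr]
    exact Finset.measurable_sum _ fun i _ => ((hcomp i).smul_const _)
  -- basic integrability in x
  have hρc0 : ∀ y x, 0 ≤ pc x * k y x := fun y x => mul_nonneg (hpc0 x) (hkpos y x).le
  have hρu0 : ∀ y x, 0 ≤ pu x * k y x := fun y x => mul_nonneg (hpu0 x) (hkpos y x).le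
  have hρci : ∀ y, Integrable fun x => pc x * k y x := by
    intro y
    by_contra hni
    have h0 := integral_undef hni
    rw [← hqc y] at h0
    exact absurd h0 (ne_of_gt (hqcpos y))
  have hρui : ∀ y, Integrable fun x => pu x * k y x := by
    intro y
    by_contra hni
    have h0 := integral_undef hni
    rw [← hqu y] at h0
    exact absurd h0 (ne_of_gt (hqupos y))
  have hwpos : ∀ y, 0 < qc y / qu y := fun y => div_pos (hqcpos y) (hqupos y)
  -- slice integrability
  have hslice_c : ∀ᵐ y ∂(volume : Measure (EuclideanSpace ℝ (Fin d))),
      Integrable fun x => pc x * k y x * ‖g y x‖ ^ 2 := hg_sq_c.prod_right_ae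
  have hslice_u : ∀ᵐ y ∂(volume : Measure (EuclideanSpace ℝ (Fin d))),
      Integrable fun x => pu x * k y x * ‖g y x‖ ^ 2 := by
    filter_upwards [hg_sq_u.prod_right_ae] with y hy
    have hne : (qc y / qu y) ≠ 0 := (hwpos y).ne'
    have h2 := hy.const_mul (qc y / qu y)⁻¹
    refine h2.congr (Filter.Eventually.of_forall fun x => ?_)
    have hq1 : qc y ≠ 0 := (hqcpos y).ne'
    have hq2 : qu y ≠ 0 := (hqupos y).ne'
    field_simp
  -- generic expansion of the inner integral
  have hexp : ∀ (p : EuclideanSpace ℝ (Fin d) → ℝ) (y : EuclideanSpace ℝ (Fin d)),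
      Measurable p → (∀ x, 0 ≤ p x) →
      Integrable (fun x => p x * k y x) →
      Integrable (fun x => p x * k y x * ‖g y x‖ ^ 2) →
      ∀ v : EuclideanSpace ℝ (Fin d),
      (Integrable fun x => (p x * k y x) • g y x) ∧
      ∫ x, p x * k y x * ‖g y x - v‖ ^ 2
        = (∫ x, p x * k y x * ‖g y x‖ ^ 2)
          - 2 * ⟪∫ x, (p x * k y x) • g y x, v⟫
          + (∫ x, p x * k y x) * ‖v‖ ^ 2 := by
    intro p y hpm hp0 hρi hρg2 v
    have hρm : Measurable fun x => p x * k y x := hpm.mul (hkym y)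
    have hsm' : AEStronglyMeasurable (fun x => (p x * k y x) • g y x) volume :=
      (hρm.smul (hgmx y)).aestronglyMeasurable
    have hρ0' : ∀ᵐ x ∂(volume : Measure (EuclideanSpace ℝ (Fin d))), 0 ≤ p x * k y x :=
      Filter.Eventually.of_forall fun x => mul_nonneg (hp0 x) (hkpos y x).le
    have hsmul : Integrable fun x => (p x * k y x) • g y x :=
      aux_int_smul hρ0' hsm' hρi hρg2
    refine ⟨hsmul, ?_⟩
    have hinner : Integrable fun x => ⟪(p x * k y x) • g y x, v⟫ := hsmul.inner_const v
    have hpt : (fun x => p x * k y x * ‖g y x - v‖ ^ 2)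
        = fun x => (p x * k y x * ‖g y x‖ ^ 2 - 2 * ⟪(p x * k y x) • g y x, v⟫)
          + (p x * k y x) * ‖v‖ ^ 2 := by
      funext x
      rw [norm_sub_sq_real, real_inner_smul_left]
      ring
    have hInt1 : Integrable (fun x => p x * k y x * ‖g y x‖ ^ 2
        - 2 * ⟪(p x * k y x) • g y x, v⟫) := hρg2.sub (hinner.const_mul 2)
    have hInt2 : Integrable (fun x => (p x * k y x) * ‖v‖ ^ 2) := hρi.mul_const _
    have h2 : ∫ x, ⟪(p x * k y x) • g y x, v⟫ = ⟪∫ x, (p x * k y x) • g y x, v⟫ := by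
      calc ∫ x, ⟪(p x * k y x) • g y x, v⟫ = ∫ x, ⟪v, (p x * k y x) • g y x⟫ := by
            simp_rw [real_inner_comm]
      _ = ⟪v, ∫ x, (p x * k y x) • g y x⟫ := integral_inner hsmul v
      _ = ⟪∫ x, (p x * k y x) • g y x, v⟫ := real_inner_comm _ _
    rw [hpt, integral_add hInt1 hInt2, integral_sub hρg2 (hinner.const_mul 2),
      integral_const_mul, integral_mul_const, h2]
  -- a.e. identification of the unnormalized scores
  have hmc : ∀ᵐ y ∂(volume : Measure (EuclideanSpace ℝ (Fin d))),
      (∫ x, (pc x * k y x) • g y x) = qc y • Sc y := by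
    filter_upwards [hscore_c, hslice_c] with y hs hint
    have h1 : (fun x => (pc x * k y x / qc y) • g y x)
        = fun x => (qc y)⁻¹ • ((pc x * k y x) • g y x) := by
      funext x
      rw [smul_smul, div_eq_inv_mul]
    rw [h1, integral_smul] at hs
    rw [hScy] at hs
    rw [hs, smul_inv_smul₀ (hqcpos y).ne']
  have hmu : ∀ᵐ y ∂(volume : Measure (EuclideanSpace ℝ (Fin d))),
      (∫ x, (pu x * k y x) • g y x) = qu y • Su y := by
    filter_upwards [hscore_u, hslice_u] with y hs hint
    have h1 : (fun x => (pu x * k y x / qu y) • g y x)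
        = fun x => (qu y)⁻¹ • ((pu x * k y x) • g y x) := by
      funext x
      rw [smul_smul, div_eq_inv_mul]
    rw [h1, integral_smul] at hs
    rw [hSuy] at hs
    rw [hs, smul_inv_smul₀ (hqupos y).ne']
  -- Cauchy–Schwarz bounds on the scores
  have hbc : ∀ᵐ y ∂(volume : Measure (EuclideanSpace ℝ (Fin d))),
      qc y * ‖Sc y‖ ^ 2 ≤ ∫ x, pc x * k y x * ‖g y x‖ ^ 2 := by
    filter_upwards [hmc, hslice_c] with y hmcy hint
    have hρ0' : ∀ᵐ x ∂(volume : Measure (EuclideanSpace ℝ (Fin d))), 0 ≤ pc x * k y x :=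
      Filter.Eventually.of_forall fun x => hρc0 y x
    have hm' : AEStronglyMeasurable (fun x => (pc x * k y x) * ‖g y x‖) volume :=
      ((hpcm.mul (hkym y)).mul (hgmx y).norm).aestronglyMeasurable
    have hcs := aux_cs_smul hρ0' hm' (hρci y) hint
    rw [hmcy, ← hqc y] at hcs
    have h2 : ‖qc y • Sc y‖ ^ 2 = (qc y) ^ 2 * ‖Sc y‖ ^ 2 := by
      rw [norm_smul, Real.norm_eq_abs, abs_of_nonneg (hqcpos y).le, mul_pow]
    rw [h2] at hcs
    nlinarith [hqcpos y, sq_nonneg (‖Sc y‖)]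
  have hbu : ∀ᵐ y ∂(volume : Measure (EuclideanSpace ℝ (Fin d))),
      qc y * ‖Su y‖ ^ 2 ≤ (qc y / qu y) * ∫ x, pu x * k y x * ‖g y x‖ ^ 2 := by
    filter_upwards [hmu, hslice_u] with y hmuy hint
    have hρ0' : ∀ᵐ x ∂(volume : Measure (EuclideanSpace ℝ (Fin d))), 0 ≤ pu x * k y x :=
      Filter.Eventually.of_forall fun x => hρu0 y x
    have hm' : AEStronglyMeasurable (fun x => (pu x * k y x) * ‖g y x‖) volume :=
      ((hpum.mul (hkym y)).mul (hgmx y).norm).aestronglyMeasurable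
    have hcs := aux_cs_smul hρ0' hm' (hρui y) hint
    rw [hmuy, ← hqu y] at hcs
    have h2 : ‖qu y • Su y‖ ^ 2 = (qu y) ^ 2 * ‖Su y‖ ^ 2 := by
      rw [norm_smul, Real.norm_eq_abs, abs_of_nonneg (hqupos y).le, mul_pow]
    rw [h2] at hcs
    have h3 : qu y * ‖Su y‖ ^ 2 ≤ ∫ x, pu x * k y x * ‖g y x‖ ^ 2 := by
      nlinarith [hqupos y, sq_nonneg (‖Su y‖)]
    have h4 : qc y * ‖Su y‖ ^ 2 = (qc y / qu y) * (qu y * ‖Su y‖ ^ 2) := by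
      rw [← mul_assoc, div_mul_cancel₀ _ (hqupos y).ne']
    rw [h4]
    exact mul_le_mul_of_nonneg_left h3 (hwpos y).le
  -- integrability in y of the second moments
  have hAci : Integrable fun y => ∫ x, pc x * k y x * ‖g y x‖ ^ 2 :=
    hg_sq_c.integral_prod_left
  have hwBui : Integrable fun y => (qc y / qu y) * ∫ x, pu x * k y x * ‖g y x‖ ^ 2 := by
    have h1 := hg_sq_u.integral_prod_left
    refine h1.congr (Filter.Eventually.of_forall fun y => ?_)
    calc (∫ x, qc y / qu y * (pu x * k y x) * ‖g y x‖ ^ 2)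
        = ∫ x, qc y / qu y * (pu x * k y x * ‖g y x‖ ^ 2) :=
          integral_congr_ae (Filter.Eventually.of_forall fun x => by ring)
      _ = qc y / qu y * ∫ x, pu x * k y x * ‖g y x‖ ^ 2 := integral_const_mul _ _
  have hqcSc2 : Integrable fun y => qc y * ‖Sc y‖ ^ 2 := by
    refine Integrable.mono' hAci
      ((hqcm.mul ((hScm.norm).pow_const 2)).aestronglyMeasurable) ?_
    filter_upwards [hbc] with y hy
    rw [Real.norm_eq_abs, abs_of_nonneg (mul_nonneg (hqcpos y).le (sq_nonneg _))]
    exact hy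
  have hqcSu2 : Integrable fun y => qc y * ‖Su y‖ ^ 2 := by
    refine Integrable.mono' hwBui
      ((hqcm.mul ((hSum.norm).pow_const 2)).aestronglyMeasurable) ?_
    filter_upwards [hbu] with y hy
    rw [Real.norm_eq_abs, abs_of_nonneg (mul_nonneg (hqcpos y).le (sq_nonneg _))]
    exact hy
  have hqcscfg2 : Integrable fun y => qc y * ‖scfg y‖ ^ 2 := by
    refine Integrable.mono'
      ((hqcSc2.const_mul (2 * (1 + η) ^ 2)).add (hqcSu2.const_mul (2 * η ^ 2)))
      ((hqcm.mul ((hscfgm.norm).pow_const 2)).aestronglyMeasurable) ?_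
    refine Filter.Eventually.of_forall fun y => ?_
    simp only [Pi.add_apply]
    rw [Real.norm_eq_abs, abs_of_nonneg (mul_nonneg (hqcpos y).le (sq_nonneg _)), hscfg' y]
    have h1 : ‖(1 + η) • Sc y - η • Su y‖ ≤ (1 + η) * ‖Sc y‖ + η * ‖Su y‖ := by
      refine le_trans (norm_sub_le _ _) ?_
      rw [norm_smul, norm_smul, Real.norm_eq_abs, Real.norm_eq_abs,
        abs_of_nonneg (by linarith : (0:ℝ) ≤ 1 + η), abs_of_nonneg hη]
    have h0 := (hqcpos y).le
    have h2 : ‖(1 + η) • Sc y - η • Su y‖ ^ 2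
        ≤ 2 * (1 + η) ^ 2 * ‖Sc y‖ ^ 2 + 2 * η ^ 2 * ‖Su y‖ ^ 2 := by
      nlinarith [pow_le_pow_left₀ (norm_nonneg ((1 + η) • Sc y - η • Su y)) h1 2,
        sq_nonneg ((1 + η) * ‖Sc y‖ - η * ‖Su y‖)]
    nlinarith [mul_le_mul_of_nonneg_left h2 h0]
  -- cross-term integrability
  have hcross : ∀ (S t : EuclideanSpace ℝ (Fin d) → EuclideanSpace ℝ (Fin d)),
      Measurable S → Measurable t →
      Integrable (fun y => qc y * ‖S y‖ ^ 2) → Integrable (fun y => qc y * ‖t y‖ ^ 2) →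
      Integrable fun y => qc y * ⟪S y, t y⟫ := by
    intro S t hSm htm hS2 ht2
    refine Integrable.mono' ((hS2.add ht2).div_const 2)
      ((hqcm.mul (hSm.inner htm)).aestronglyMeasurable) ?_
    refine Filter.Eventually.of_forall fun y => ?_
    simp only [Pi.add_apply]
    have h1 : |⟪S y, t y⟫| ≤ ‖S y‖ * ‖t y‖ := abs_real_inner_le_norm _ _
    have h0 := (hqcpos y).le
    rw [Real.norm_eq_abs, abs_mul, abs_of_nonneg h0]
    nlinarith [mul_le_mul_of_nonneg_left h1 h0, sq_nonneg (‖S y‖ - ‖t y‖),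
      mul_le_mul_of_nonneg_left (sq_nonneg (‖S y‖ - ‖t y‖)) h0]
  -- formula for the conditional term
  have hIc : ∀ t : EuclideanSpace ℝ (Fin d) → EuclideanSpace ℝ (Fin d), Measurable t →
      Integrable (fun y => qc y * ‖t y‖ ^ 2) →
      (∫ y, ∫ x, pc x * k y x * ‖g y x - t y‖ ^ 2)
        = (∫ y, ∫ x, pc x * k y x * ‖g y x‖ ^ 2)
          - 2 * (∫ y, qc y * ⟪Sc y, t y⟫) + ∫ y, qc y * ‖t y‖ ^ 2 := by
    intro t htm ht2
    have hX := hcross Sc t hScm htm hqcSc2 ht2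
    have hcongr : (∫ y, ∫ x, pc x * k y x * ‖g y x - t y‖ ^ 2)
        = ∫ y, ((∫ x, pc x * k y x * ‖g y x‖ ^ 2)
            - 2 * (qc y * ⟪Sc y, t y⟫) + qc y * ‖t y‖ ^ 2) := by
      refine integral_congr_ae ?_
      filter_upwards [hslice_c, hmc] with y hint hmcy
      have he := (hexp pc y hpcm hpc0 (hρci y) hint (t y)).2
      rw [he, hmcy, real_inner_smul_left, ← hqc y]
    have hInt1 : Integrable (fun y => (∫ x, pc x * k y x * ‖g y x‖ ^ 2)
        - 2 * (qc y * ⟪Sc y, t y⟫)) := hAci.sub (hX.const_mul 2)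
    rw [hcongr, integral_add hInt1 ht2, integral_sub hAci (hX.const_mul 2),
      integral_const_mul]
  -- formula for the unconditional term
  have hIu : ∀ t : EuclideanSpace ℝ (Fin d) → EuclideanSpace ℝ (Fin d), Measurable t →
      Integrable (fun y => qc y * ‖t y‖ ^ 2) →
      (∫ y, ∫ x, (qc y / qu y) * (pu x * k y x) * ‖g y x - t y‖ ^ 2)
        = (∫ y, (qc y / qu y) * ∫ x, pu x * k y x * ‖g y x‖ ^ 2)
          - 2 * (∫ y, qc y * ⟪Su y, t y⟫) + ∫ y, qc y * ‖t y‖ ^ 2 := by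
    intro t htm ht2
    have hX := hcross Su t hSum htm hqcSu2 ht2
    have hcongr : (∫ y, ∫ x, (qc y / qu y) * (pu x * k y x) * ‖g y x - t y‖ ^ 2)
        = ∫ y, ((qc y / qu y) * (∫ x, pu x * k y x * ‖g y x‖ ^ 2)
            - 2 * (qc y * ⟪Su y, t y⟫) + qc y * ‖t y‖ ^ 2) := by
      refine integral_congr_ae ?_
      filter_upwards [hslice_u, hmu] with y hint hmuy
      have hw : ∫ x, (qc y / qu y) * (pu x * k y x) * ‖g y x - t y‖ ^ 2
          = (qc y / qu y) * ∫ x, pu x * k y x * ‖g y x - t y‖ ^ 2 :=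
        calc (∫ x, qc y / qu y * (pu x * k y x) * ‖g y x - t y‖ ^ 2)
            = ∫ x, qc y / qu y * (pu x * k y x * ‖g y x - t y‖ ^ 2) :=
              integral_congr_ae (Filter.Eventually.of_forall fun x => by ring)
          _ = qc y / qu y * ∫ x, pu x * k y x * ‖g y x - t y‖ ^ 2 := integral_const_mul _ _
      have he := (hexp pu y hpum hpu0 (hρui y) hint (t y)).2
      rw [hw, he, hmuy, real_inner_smul_left, ← hqu y]
      have hqune : qu y ≠ 0 := (hqupos y).ne'
      field_simp
    have hInt1 : Integrable (fun y => (qc y / qu y) * (∫ x, pu x * k y x * ‖g y x‖ ^ 2)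
        - 2 * (qc y * ⟪Su y, t y⟫)) := hwBui.sub (hX.const_mul 2)
    rw [hcongr, integral_add hInt1 ht2, integral_sub hwBui (hX.const_mul 2),
      integral_const_mul]
  -- formula for J
  have hJform : ∀ t : EuclideanSpace ℝ (Fin d) → EuclideanSpace ℝ (Fin d), Measurable t →
      Integrable (fun y => qc y * ‖t y‖ ^ 2) →
      J t = ((1 + η) * (∫ y, ∫ x, pc x * k y x * ‖g y x‖ ^ 2)
            - η * ∫ y, (qc y / qu y) * ∫ x, pu x * k y x * ‖g y x‖ ^ 2)
          - 2 * (∫ y, qc y * ⟪scfg y, t y⟫) + ∫ y, qc y * ‖t y‖ ^ 2 := by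
    intro t htm ht2
    have hXc := hcross Sc t hScm htm hqcSc2 ht2
    have hXu := hcross Su t hSum htm hqcSu2 ht2
    have hcombine : (1 + η) * (∫ y, qc y * ⟪Sc y, t y⟫) - η * (∫ y, qc y * ⟪Su y, t y⟫)
        = ∫ y, qc y * ⟪scfg y, t y⟫ := by
      have hInt1 : Integrable (fun y => (1 + η) * (qc y * ⟪Sc y, t y⟫)) := hXc.const_mul _
      have hInt2 : Integrable (fun y => η * (qc y * ⟪Su y, t y⟫)) := hXu.const_mul _
      rw [← integral_const_mul, ← integral_const_mul, ← integral_sub hInt1 hInt2]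
      refine integral_congr_ae (Filter.Eventually.of_forall fun y => ?_)
      dsimp only
      rw [hscfg' y, inner_sub_left, real_inner_smul_left, real_inner_smul_left]
      ring
    rw [hJ t, hIc t htm ht2, hIu t htm ht2]
    linear_combination (-2 : ℝ) * hcombine
  -- assemble
  have hJs := hJform s hsm hs_sq
  have hJcfg := hJform scfg hscfgm hqcscfg2
  have hinnercfg : (∫ y, qc y * ⟪scfg y, scfg y⟫) = ∫ y, qc y * ‖scfg y‖ ^ 2 := by
    refine integral_congr_ae (Filter.Eventually.of_forall fun y => ?_)
    dsimp only
    rw [real_inner_self_eq_norm_sq]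
  have hXs := hcross scfg s hscfgm hsm hqcscfg2 hs_sq
  have hmain : J s - J scfg = ∫ y, qc y * ‖s y - scfg y‖ ^ 2 := by
    rw [hJs, hJcfg, hinnercfg]
    have hsum : (∫ y, qc y * ‖s y‖ ^ 2) - 2 * (∫ y, qc y * ⟪scfg y, s y⟫)
        + (∫ y, qc y * ‖scfg y‖ ^ 2) = ∫ y, qc y * ‖s y - scfg y‖ ^ 2 := by
      have hInt1 : Integrable (fun y => qc y * ‖s y‖ ^ 2 - 2 * (qc y * ⟪scfg y, s y⟫)) :=
        hs_sq.sub (hXs.const_mul 2)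
      rw [← integral_const_mul, ← integral_sub hs_sq (hXs.const_mul 2),
        ← integral_add hInt1 hqcscfg2]
      refine integral_congr_ae (Filter.Eventually.of_forall fun y => ?_)
      dsimp only
      rw [norm_sub_sq_real, real_inner_comm (s y) (scfg y)]
      ring
    linarith [hsum]
  refine ⟨hmain, integral_nonneg fun y => mul_nonneg (hqcpos y).le (sq_nonneg _), ?_⟩
  intro hJeq
  have hzero : (∫ y, qc y * ‖s y - scfg y‖ ^ 2) = 0 := by
    rw [← hmain, hJeq]
    ring
  have hInt : Integrable fun y => qc y * ‖s y - scfg y‖ ^ 2 := by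
    refine Integrable.mono' ((hs_sq.const_mul 2).add (hqcscfg2.const_mul 2))
      ((hqcm.mul (((hsm.sub hscfgm).norm).pow_const 2)).aestronglyMeasurable) ?_
    refine Filter.Eventually.of_forall fun y => ?_
    simp only [Pi.add_apply]
    have h1 : ‖s y - scfg y‖ ≤ ‖s y‖ + ‖scfg y‖ := norm_sub_le _ _
    have h0 := (hqcpos y).le
    rw [Real.norm_eq_abs, abs_of_nonneg (mul_nonneg h0 (sq_nonneg _))]
    have h2 : ‖s y - scfg y‖ ^ 2 ≤ 2 * ‖s y‖ ^ 2 + 2 * ‖scfg y‖ ^ 2 := by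
      nlinarith [pow_le_pow_left₀ (norm_nonneg (s y - scfg y)) h1 2,
        sq_nonneg (‖s y‖ - ‖scfg y‖)]
    nlinarith [mul_le_mul_of_nonneg_left h2 h0]
  have hae := (integral_eq_zero_iff_of_nonneg_ae
    (Filter.Eventually.of_forall fun y => mul_nonneg (hqcpos y).le (sq_nonneg _))
    hInt).mp hzero
  refine (ae_withDensity_iff (hqcm.ennreal_ofReal)).mpr ?_
  filter_upwards [hae] with y hy _
  simp only [Pi.zero_apply] at hy
  have h2 : ‖s y - scfg y‖ ^ 2 = 0 := by
    rcases mul_eq_zero.mp hy with h | h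
    · exact absurd h (hqcpos y).ne'
    · exact h
  have h3 : ‖s y - scfg y‖ = 0 := by
    have := sq_eq_zero_iff.mp h2
    exact this
  exact sub_eq_zero.mp (norm_eq_zero.mp h3)
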